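/- For a constant a ≠ 0, the function U(t,x) = a − 4a / (4a² z² + 1), where z = x − 6a² t, is a solution of the mKdV equation U_t + 6U² U_x + U_{xxx} = 0. -/

import Mathlib

private lemma q_pos (a c y : ℝ) : (0:ℝ) < 4 * a^2 * (y - c)^2 + 1 := by positivity

private lemma hq_deriv (a c y : ℝ) :
    HasDerivAt (fun y => 4 * a^2 * (y - c)^2 + 1) (8 * a^2 * (y - c)) y := by
  have h : HasDerivAt (fun y : ℝ => y - c) 1 y := (hasDerivAt_id y).sub_const c
  have := ((h.fun_pow 2).const_mul (4 * a^2)).add_const 1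
  refine this.congr_deriv ?_
  ring

private lemma hd0 (a c y : ℝ) :
    HasDerivAt (fun y => a - 4 * a / (4 * a^2 * (y - c)^2 + 1))
      (32 * a^3 * (y - c) / (4 * a^2 * (y - c)^2 + 1)^2) y := by
  have hne := (q_pos a c y).ne'
  have h := ((hasDerivAt_const y (4*a)).fun_div (hq_deriv a c y) hne).const_sub a
  refine h.congr_deriv ?_
  field_simp
  ring

private lemma hd1 (a c y : ℝ) :
    HasDerivAt (fun y => 32 * a^3 * (y - c) / (4 * a^2 * (y - c)^2 + 1)^2)
      (32 * a^3 * (1 - 12 * a^2 * (y - c)^2) / (4 * a^2 * (y - c)^2 + 1)^3) y := by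
  have hne := (q_pos a c y).ne'
  have hnum : HasDerivAt (fun y : ℝ => 32 * a^3 * (y - c)) (32 * a^3) y := by
    have := ((hasDerivAt_id y).sub_const c).const_mul (32 * a^3)
    simpa using this
  have hden : HasDerivAt (fun y => (4 * a^2 * (y - c)^2 + 1)^2)
      (2 * (4 * a^2 * (y - c)^2 + 1) * (8 * a^2 * (y - c))) y := by
    have := (hq_deriv a c y).fun_pow 2
    refine this.congr_deriv ?_
    ring
  have h := hnum.fun_div hden (pow_ne_zero 2 hne)
  refine h.congr_deriv ?_
  field_simp
  ring

private lemma hd2 (a c y : ℝ) :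
    HasDerivAt (fun y => 32 * a^3 * (1 - 12 * a^2 * (y - c)^2) / (4 * a^2 * (y - c)^2 + 1)^3)
      ((-768 * a^5 * (y - c) * (4 * a^2 * (y - c)^2 + 1)
        - 32 * a^3 * (1 - 12 * a^2 * (y - c)^2) * (3 * (8 * a^2 * (y - c))))
        / (4 * a^2 * (y - c)^2 + 1)^4) y := by
  have hne := (q_pos a c y).ne'
  have hnum : HasDerivAt (fun y : ℝ => 32 * a^3 * (1 - 12 * a^2 * (y - c)^2))
      (-768 * a^5 * (y - c)) y := by
    have h : HasDerivAt (fun y : ℝ => y - c) 1 y := (hasDerivAt_id y).sub_const c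
    have := (((h.fun_pow 2).const_mul (12 * a^2)).const_sub 1).const_mul (32 * a^3)
    refine this.congr_deriv ?_
    ring
  have hden : HasDerivAt (fun y => (4 * a^2 * (y - c)^2 + 1)^3)
      (3 * (4 * a^2 * (y - c)^2 + 1)^2 * (8 * a^2 * (y - c))) y := by
    have := (hq_deriv a c y).fun_pow 3
    refine this.congr_deriv ?_
    norm_num
  have h := hnum.fun_div hden (pow_ne_zero 3 hne)
  refine h.congr_deriv ?_
  field_simp

/-- Rational solution of the mKdV equation `U_t + 6U²U_x + U_{xxx} = 0`. -/
theorem stmt_5 (a : ℝ) (ha : a ≠ 0) (U : ℝ → ℝ → ℝ)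
    (hU : ∀ t x, U t x = a - 4 * a / (4 * a^2 * (x - 6 * a^2 * t)^2 + 1)) :
    ∀ t x, deriv (fun s => U s x) t + 6 * (U t x)^2 * deriv (U t) x
      + iteratedDeriv 3 (U t) x = 0 := by
  intro t x
  set c := 6 * a^2 * t with hc
  have hUt : U t = fun y => a - 4 * a / (4 * a^2 * (y - c)^2 + 1) := by
    funext y; rw [hU t y]
  -- time derivative
  have hdt : HasDerivAt (fun s => U s x)
      (-(192 * a^5 * (x - c)) / (4 * a^2 * (x - c)^2 + 1)^2) t := by
    have hinner : HasDerivAt (fun s : ℝ => x - 6 * a^2 * s) (-(6 * a^2)) t := by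
      have := ((hasDerivAt_id t).const_mul (6 * a^2)).const_sub x
      simpa using this
    have hq : HasDerivAt (fun s => 4 * a^2 * (x - 6 * a^2 * s)^2 + 1)
        (4 * a^2 * (2 * (x - 6 * a^2 * t) * (-(6 * a^2)))) t := by
      have := ((hinner.fun_pow 2).const_mul (4 * a^2)).add_const 1
      refine this.congr_deriv ?_
      ring
    have hne := (q_pos a c x).ne'
    have hne' : 4 * a^2 * (x - 6 * a^2 * t)^2 + 1 ≠ 0 := by
      simpa [hc] using hne
    have h := ((hasDerivAt_const t (4*a)).fun_div hq hne').const_sub a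
    have heq : (fun s => U s x) =
        (fun s => a - 4 * a / (4 * a ^ 2 * (x - 6 * a ^ 2 * s) ^ 2 + 1)) := by
      funext s; rw [hU s x]
    rw [heq]
    refine h.congr_deriv ?_
    rw [hc]
    field_simp
    ring
  -- spatial derivatives
  have e1 : deriv (U t) = fun y => 32 * a^3 * (y - c) / (4 * a^2 * (y - c)^2 + 1)^2 := by
    funext y; rw [hUt]; exact (hd0 a c y).deriv
  have e2 : deriv (deriv (U t)) = fun y =>
      32 * a^3 * (1 - 12 * a^2 * (y - c)^2) / (4 * a^2 * (y - c)^2 + 1)^3 := by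
    funext y; rw [e1]; exact (hd1 a c y).deriv
  have e3 : iteratedDeriv 3 (U t) x =
      (-768 * a^5 * (x - c) * (4 * a^2 * (x - c)^2 + 1)
        - 32 * a^3 * (1 - 12 * a^2 * (x - c)^2) * (3 * (8 * a^2 * (x - c))))
        / (4 * a^2 * (x - c)^2 + 1)^4 := by
    rw [show iteratedDeriv 3 (U t) x = iteratedDeriv (2 + 1) (U t) x from rfl, iteratedDeriv_succ, iteratedDeriv_succ,
      iteratedDeriv_one, e2]
    exact (hd2 a c x).deriv
  rw [hdt.deriv, e1, e3, hU t x, ← hc]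
  have hne := (q_pos a c x).ne'
  field_simp
  ring
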